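/- arXiv:2502.05545 — 2 statements merged into one kernel-verified Lean document; each statement's English description precedes it below -/
import Mathlib

section
/- (Existence and uniqueness for the three-phase Stefan problem with Neumann condition, reduced form.) Assume α₂ > α₃ and q₀ > q₂, where q₂ := k₂·(B−C)/(√(α₂·π)·erf(z₀·√(α₁/α₂))). Then there exists a unique λ₁ > z₀ such that Q(λ₁) = P(λ₂), where λ₂ ≥ 0 is the unique number satisfying erf(λ₂·√(α₁/α₂)) = H(λ₁). -/
noncomputable section

/-- The error function `erf x = (2/√π) ∫₀ˣ exp(−s²) ds`. -/
def erf (x : ℝ) : ℝ := (2 / Real.sqrt Real.pi) * ∫ s in (0:ℝ)..x, Real.exp (-(s^2))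

/-- The complementary error function. -/
def erfc (x : ℝ) : ℝ := 1 - erf x

/-- Physical data of the three-phase Stefan problem: positive thermal conductivities,
specific heats, mass density, latent heats, and temperatures `B > C > D`. -/
structure Params where
  k₁ : ℝ
  k₂ : ℝ
  k₃ : ℝ
  c₁ : ℝ
  c₂ : ℝ
  c₃ : ℝ
  ρ : ℝ
  ℓ₁ : ℝ
  ℓ₂ : ℝ
  B : ℝ
  C : ℝ
  D : ℝ
  hk₁ : 0 < k₁
  hk₂ : 0 < k₂
  hk₃ : 0 < k₃
  hc₁ : 0 < c₁
  hc₂ : 0 < c₂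
  hc₃ : 0 < c₃
  hρ : 0 < ρ
  hℓ₁ : 0 < ℓ₁
  hℓ₂ : 0 < ℓ₂
  hBC : C < B
  hCD : D < C

namespace Params

/-- Thermal diffusivity of phase 1. -/
def α₁ (p : Params) : ℝ := p.k₁ / (p.ρ * p.c₁)

/-- Thermal diffusivity of phase 2. -/
def α₂ (p : Params) : ℝ := p.k₂ / (p.ρ * p.c₂)

/-- Thermal diffusivity of phase 3. -/
def α₃ (p : Params) : ℝ := p.k₃ / (p.ρ * p.c₃)

/-- Stefan number `Ste₁ = c₁(C−D)/ℓ₁`. -/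
def Ste₁ (p : Params) : ℝ := p.c₁ * (p.C - p.D) / p.ℓ₁

/-- Stefan number `Ste₂ = c₂(B−C)/ℓ₂`. -/
def Ste₂ (p : Params) : ℝ := p.c₂ * (p.B - p.C) / p.ℓ₂

/-- `φ(z) = z + (Ste₁/√π) exp(−z²)/erfc(z)`. -/
def φ (p : Params) (z : ℝ) : ℝ :=
  z + (p.Ste₁ / Real.sqrt Real.pi) * Real.exp (-(z^2)) / erfc z

/-- `H(z) = erf(z√(α₁/α₂)) − (Ste₂/√π)(ℓ₂/ℓ₁)√(k₂c₁/(k₁c₂)) exp(−z²α₁/α₂)/φ(z)`. -/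
def H (p : Params) (z : ℝ) : ℝ :=
  erf (z * Real.sqrt (p.α₁ / p.α₂)) -
    (p.Ste₂ / Real.sqrt Real.pi) * (p.ℓ₂ / p.ℓ₁) *
      Real.sqrt (p.k₂ * p.c₁ / (p.k₁ * p.c₂)) *
      (Real.exp (-(z^2) * (p.α₁ / p.α₂)) / p.φ z)

/-- `Q(z) = (ℓ₁/ℓ₂) φ(z) exp(z² α₁/α₂)`. -/
def Q (p : Params) (z : ℝ) : ℝ :=
  (p.ℓ₁ / p.ℓ₂) * p.φ z * Real.exp (z^2 * (p.α₁ / p.α₂))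

/-- The function `T` arising from the Robin (convective) boundary condition with
heat-transfer coefficient `h₀` and bulk temperature `Ainf`. -/
def T (p : Params) (h₀ Ainf : ℝ) (z : ℝ) : ℝ :=
  (p.Ste₂ / (Real.sqrt Real.pi * p.c₂)) * ((Ainf - p.B) / (p.B - p.C)) *
    Real.sqrt (p.k₃ * p.c₁ * p.c₃ / p.k₁) *
    (Real.exp (-(z^2) * p.α₁ * (1 / p.α₃ - 1 / p.α₂)) /
      (p.k₃ / (h₀ * Real.sqrt (Real.pi * p.α₃)) + erf (z * Real.sqrt (p.α₁ / p.α₃)))) -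
  z * Real.exp (z^2 * (p.α₁ / p.α₂))

/-- The function `V` arising from the Dirichlet boundary condition with temperature `A`. -/
def V (p : Params) (A : ℝ) (z : ℝ) : ℝ :=
  ((A - p.B) / p.ℓ₂) * Real.sqrt (p.c₁ * p.c₃ * p.k₃ / (Real.pi * p.k₁)) *
    (Real.exp (-(z^2) * (p.α₁ / p.α₃ - p.α₁ / p.α₂)) / erf (z * Real.sqrt (p.α₁ / p.α₃))) -
  z * Real.exp (z^2 * (p.α₁ / p.α₂))

/-- The function `P` arising from the Neumann boundary condition with flux coefficient `q₀`. -/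
def P (p : Params) (q₀ : ℝ) (z : ℝ) : ℝ :=
  Real.exp (z^2 * (p.α₁ / p.α₂)) *
    (-z + (q₀ / p.ℓ₂) * Real.sqrt (p.c₁ / (p.ρ * p.k₁)) * Real.exp (-(z^2) * (p.α₁ / p.α₃)))

/-- Critical heat-transfer coefficient `h₂`. -/
def h2 (p : Params) (Ainf z₀ : ℝ) : ℝ :=
  ((p.B - p.C) / (Ainf - p.B)) *
    Real.sqrt (p.k₂ * p.k₃ * p.c₂ / (Real.pi * p.c₃ * p.α₃)) *
    (1 / erf (z₀ * Real.sqrt (p.α₁ / p.α₂)))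

/-- Critical heat-flux coefficient `q₂`. -/
def q2 (p : Params) (z₀ : ℝ) : ℝ :=
  p.k₂ * (p.B - p.C) / (Real.sqrt (p.α₂ * Real.pi) * erf (z₀ * Real.sqrt (p.α₁ / p.α₂)))

end Params

open MeasureTheory Real Set Filter Topology

lemma sqrt_pi_pos : 0 < Real.sqrt Real.pi := Real.sqrt_pos.2 Real.pi_pos

lemma gauss_cont : Continuous fun s : ℝ => Real.exp (-(s^2)) := by continuity

lemma gauss_integrableOn (a : ℝ) :
    IntegrableOn (fun s : ℝ => Real.exp (-(s^2))) (Ioi a) := by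
  have := (integrable_exp_neg_mul_sq (b := 1) one_pos).integrableOn (s := Ioi a)
  simpa using this

lemma gauss_ii (a b : ℝ) :
    IntervalIntegrable (fun s : ℝ => Real.exp (-(s^2))) volume a b :=
  gauss_cont.intervalIntegrable a b

lemma erf_hasDerivAt (x : ℝ) :
    HasDerivAt erf (2 / Real.sqrt Real.pi * Real.exp (-(x^2))) x := by
  have h := intervalIntegral.integral_hasDerivAt_right (gauss_ii 0 x)
    (gauss_cont.stronglyMeasurable.stronglyMeasurableAtFilter) gauss_cont.continuousAt
  exact h.const_mul (2 / Real.sqrt Real.pi)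
lemma erf_continuous : Continuous erf :=
  continuous_iff_continuousAt.2 fun x => (erf_hasDerivAt x).continuousAt

lemma erf_zero : erf 0 = 0 := by simp [erf]

lemma erf_strictMono : StrictMono erf := by
  have h : ∀ x : ℝ, 0 < deriv erf x := by
    intro x
    rw [(erf_hasDerivAt x).deriv]
    positivity
  exact strictMono_of_deriv_pos h

lemma erf_nonneg {x : ℝ} (hx : 0 ≤ x) : 0 ≤ erf x := by
  rw [← erf_zero]; exact erf_strictMono.monotone hx

lemma gauss_total : ∫ s in Ioi (0:ℝ), Real.exp (-(s^2)) = Real.sqrt Real.pi / 2 := by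
  have h := integral_gaussian_Ioi 1
  simpa using h

lemma gauss_tail_pos (x : ℝ) : 0 < ∫ s in Ioi x, Real.exp (-(s^2)) := by
  rw [setIntegral_pos_iff_support_of_nonneg_ae
    (Filter.Eventually.of_forall fun t => (Real.exp_pos _).le) (gauss_integrableOn x)]
  have : (Function.support fun s : ℝ => Real.exp (-(s^2))) = Set.univ := by
    ext t; simp [Function.support, Real.exp_ne_zero]
  rw [this, Set.univ_inter]
  simp

lemma gauss_split {x : ℝ} (hx : 0 ≤ x) :
    (∫ s in Ioc (0:ℝ) x, Real.exp (-(s^2))) + ∫ s in Ioi x, Real.exp (-(s^2))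
      = Real.sqrt Real.pi / 2 := by
  rw [← gauss_total, ← setIntegral_union (Ioc_disjoint_Ioi le_rfl) measurableSet_Ioi
      ((gauss_integrableOn 0).mono_set Ioc_subset_Ioi_self) (gauss_integrableOn x),
    Ioc_union_Ioi_eq_Ioi hx]

lemma erf_lt_one (x : ℝ) : erf x < 1 := by
  rcases le_or_gt x 0 with hx | hx
  · have := erf_strictMono.monotone hx
    rw [erf_zero] at this
    linarith
  · have h1 : erf x = (2 / Real.sqrt Real.pi) * ∫ s in Ioc (0:ℝ) x, Real.exp (-(s^2)) := by
      rw [erf, intervalIntegral.integral_of_le hx.le]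
    have h2 := gauss_split hx.le
    have h3 := gauss_tail_pos x
    have h4 : (∫ s in Ioc (0:ℝ) x, Real.exp (-(s^2))) < Real.sqrt Real.pi / 2 := by linarith
    rw [h1]
    calc 2 / Real.sqrt Real.pi * ∫ s in Ioc (0:ℝ) x, Real.exp (-(s^2))
        < 2 / Real.sqrt Real.pi * (Real.sqrt Real.pi / 2) := by
          exact mul_lt_mul_of_pos_left h4 (by positivity)
    _ = 1 := by field_simp
  
lemma erfc_pos (x : ℝ) : 0 < erfc x := by
  have h := erf_lt_one x
  unfold erfc
  linarith

lemma erf_tendsto_one : Tendsto erf atTop (𝓝 1) := by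
  have h := MeasureTheory.intervalIntegral_tendsto_integral_Ioi 0 (gauss_integrableOn 0)
    tendsto_id
  have h2 := h.const_mul (2 / Real.sqrt Real.pi)
  rw [gauss_total] at h2
  have : 2 / Real.sqrt Real.pi * (Real.sqrt Real.pi / 2) = 1 := by
    field_simp
  rw [this] at h2
  exact h2

lemma erfc_eq_tail {x : ℝ} (hx : 0 ≤ x) :
    erfc x = (2 / Real.sqrt Real.pi) * ∫ s in Ioi x, Real.exp (-(s^2)) := by
  have h1 : erf x = (2 / Real.sqrt Real.pi) * ∫ s in Ioc (0:ℝ) x, Real.exp (-(s^2)) := by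
    rw [erf, intervalIntegral.integral_of_le hx]
  have h2 := gauss_split hx
  have h3 : (1:ℝ) = 2 / Real.sqrt Real.pi * (Real.sqrt Real.pi / 2) := by
    have hpi := sqrt_pi_pos
    field_simp
  rw [erfc, h1, h3, ← h2]
  ring
lemma integrable_s_gauss (z : ℝ) :
    IntegrableOn (fun s : ℝ => s * Real.exp (-(s^2))) (Ioi z) := by
  have h := (integrable_mul_exp_neg_mul_sq (b := 1) one_pos).integrableOn (s := Ioi z)
  simpa using h

lemma integral_s_gauss (z : ℝ) :
    ∫ s in Ioi z, s * Real.exp (-(s^2)) = Real.exp (-(z^2)) / 2 := by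
  have hderiv : ∀ x ∈ Ici z, HasDerivAt (fun s : ℝ => -Real.exp (-(s^2)) / 2)
      (x * Real.exp (-(x^2))) x := by
    intro x _
    have h1 : HasDerivAt (fun s : ℝ => -(s^2)) (-(2*x)) x := by
      simpa [Pi.neg_def] using (hasDerivAt_pow 2 x).neg
    have h3 := (h1.exp.neg).div_const 2
    exact h3.congr_deriv (by ring)
  have htend : Tendsto (fun s : ℝ => -Real.exp (-(s^2)) / 2) atTop (𝓝 0) := by
    have h1 : Tendsto (fun s : ℝ => -(s^2)) atTop atBot := by
      apply tendsto_neg_atBot_iff.2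
      exact tendsto_pow_atTop (two_ne_zero)
    have h2 := (Real.tendsto_exp_atBot.comp h1).neg.div_const 2
    simpa using h2
  have h := integral_Ioi_of_hasDerivAt_of_tendsto' hderiv (integrable_s_gauss z) htend
  rw [h]
  ring

lemma mills {z : ℝ} (hz : 0 ≤ z) :
    z * erfc z ≤ Real.exp (-(z^2)) / Real.sqrt Real.pi := by
  have h1 := erfc_eq_tail hz
  have hmono : (∫ s in Ioi z, z * Real.exp (-(s^2))) ≤ ∫ s in Ioi z, s * Real.exp (-(s^2)) := by
    apply setIntegral_mono_on ((gauss_integrableOn z).const_mul z) (integrable_s_gauss z)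
      measurableSet_Ioi
    intro s hs
    exact mul_le_mul_of_nonneg_right (le_of_lt hs) (Real.exp_pos _).le
  rw [MeasureTheory.integral_const_mul, integral_s_gauss] at hmono
  have hπ := sqrt_pi_pos
  rw [h1]
  rw [div_eq_mul_inv, ← mul_assoc]
  calc z * (2 / Real.sqrt Real.pi) * ∫ s in Ioi z, Real.exp (-(s^2))
      = (2 / Real.sqrt Real.pi) * (z * ∫ s in Ioi z, Real.exp (-(s^2))) := by ring
    _ ≤ (2 / Real.sqrt Real.pi) * (Real.exp (-(z^2)) / 2) := by
        apply mul_le_mul_of_nonneg_left hmono (by positivity)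
    _ = Real.exp (-(z^2)) * (Real.sqrt Real.pi)⁻¹ := by
        field_simp

lemma erfc_continuous : Continuous erfc := continuous_const.sub erf_continuous

lemma erfc_hasDerivAt (x : ℝ) :
    HasDerivAt erfc (-(2 / Real.sqrt Real.pi * Real.exp (-(x^2)))) x := by
  exact ((hasDerivAt_const x (1:ℝ)).sub (erf_hasDerivAt x)).congr_deriv (by ring)

def ugauss (z : ℝ) : ℝ := Real.exp (-(z^2)) / erfc z

lemma ugauss_pos (z : ℝ) : 0 < ugauss z := div_pos (Real.exp_pos _) (erfc_pos z)

lemma ugauss_continuous : Continuous ugauss :=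
  gauss_cont.div erfc_continuous fun x => (erfc_pos x).ne'

lemma ugauss_hasDerivAt (x : ℝ) :
    HasDerivAt ugauss
      ((Real.exp (-(x^2)) * (-(2*x)) * erfc x -
        Real.exp (-(x^2)) * (-(2 / Real.sqrt Real.pi * Real.exp (-(x^2))))) / erfc x ^ 2) x := by
  have h1 : HasDerivAt (fun s : ℝ => Real.exp (-(s^2))) (Real.exp (-(x^2)) * (-(2*x))) x := by
    have h : HasDerivAt (fun s : ℝ => -(s^2)) (-(2*x)) x := by
      simpa [Pi.neg_def] using (hasDerivAt_pow 2 x).neg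
    exact h.exp
  exact h1.div (erfc_hasDerivAt x) (erfc_pos x).ne'

lemma ugauss_deriv_nonneg {x : ℝ} (hx : 0 ≤ x) : 0 ≤ deriv ugauss x := by
  rw [(ugauss_hasDerivAt x).deriv]
  have hm := mills hx
  have e1 : 0 < Real.exp (-(x^2)) := Real.exp_pos _
  have hπ := sqrt_pi_pos
  apply div_nonneg _ (sq_nonneg _)
  have key := mul_le_mul_of_nonneg_left hm (by positivity : (0:ℝ) ≤ 2 * Real.exp (-(x^2)))
  have expand : 2 * Real.exp (-(x^2)) * (Real.exp (-(x^2)) / Real.sqrt Real.pi)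
      = Real.exp (-(x^2)) * (2 / Real.sqrt Real.pi * Real.exp (-(x^2))) := by ring
  rw [expand] at key
  nlinarith [key]

lemma ugauss_mono : MonotoneOn ugauss (Ici 0) := by
  apply monotoneOn_of_deriv_nonneg (convex_Ici 0) ugauss_continuous.continuousOn
  · intro x _
    exact (ugauss_hasDerivAt x).differentiableAt.differentiableWithinAt
  · intro x hx
    rw [interior_Ici] at hx
    exact ugauss_deriv_nonneg (le_of_lt hx)
namespace Params

variable (p : Params)

lemma α₁_pos : 0 < p.α₁ := div_pos p.hk₁ (mul_pos p.hρ p.hc₁)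
lemma α₂_pos : 0 < p.α₂ := div_pos p.hk₂ (mul_pos p.hρ p.hc₂)
lemma α₃_pos : 0 < p.α₃ := div_pos p.hk₃ (mul_pos p.hρ p.hc₃)
lemma Ste₁_pos : 0 < p.Ste₁ := div_pos (mul_pos p.hc₁ (sub_pos.2 p.hCD)) p.hℓ₁
lemma Ste₂_pos : 0 < p.Ste₂ := div_pos (mul_pos p.hc₂ (sub_pos.2 p.hBC)) p.hℓ₂

lemma φ_eq : p.φ = fun z => z + (p.Ste₁ / Real.sqrt Real.pi) * ugauss z := by
  funext z
  rw [φ, ugauss, mul_div_assoc]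

lemma φ_pos {z : ℝ} (hz : 0 ≤ z) : 0 < p.φ z := by
  rw [φ_eq]
  have h1 := ugauss_pos z
  have h2 := p.Ste₁_pos
  have h3 := sqrt_pi_pos
  positivity

lemma φ_mono : MonotoneOn p.φ (Ici 0) := by
  rw [φ_eq]
  intro x hx y hy hxy
  have h := ugauss_mono hx hy hxy
  have hc : 0 ≤ p.Ste₁ / Real.sqrt Real.pi := by
    have := p.Ste₁_pos; have := sqrt_pi_pos; positivity
  exact add_le_add hxy (mul_le_mul_of_nonneg_left h hc)

lemma φ_continuous : Continuous p.φ := by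
  rw [φ_eq]
  exact continuous_id.add (continuous_const.mul ugauss_continuous)

lemma b_pos : 0 < p.α₁ / p.α₂ := div_pos p.α₁_pos p.α₂_pos

/-- `Q` is strictly monotone on `[0,∞)`. -/
lemma Q_strictMonoOn : StrictMonoOn p.Q (Ici 0) := by
  intro x hx y hy hxy
  have h1 : p.φ x ≤ p.φ y := p.φ_mono hx hy hxy.le
  have h2 : 0 < p.φ x := p.φ_pos hx
  have h3 : Real.exp (x^2 * (p.α₁ / p.α₂)) < Real.exp (y^2 * (p.α₁ / p.α₂)) := by
    apply Real.exp_lt_exp.2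
    apply mul_lt_mul_of_pos_right _ p.b_pos
    have hx0 : (0:ℝ) ≤ x := hx
    nlinarith
  have h4 : 0 < p.ℓ₁ / p.ℓ₂ := div_pos p.hℓ₁ p.hℓ₂
  rw [Q, Q]
  have h5 : 0 < Real.exp (x^2 * (p.α₁ / p.α₂)) := Real.exp_pos _
  calc p.ℓ₁ / p.ℓ₂ * p.φ x * Real.exp (x^2 * (p.α₁ / p.α₂))
      ≤ p.ℓ₁ / p.ℓ₂ * p.φ y * Real.exp (x^2 * (p.α₁ / p.α₂)) :=
        mul_le_mul_of_nonneg_right (mul_le_mul_of_nonneg_left h1 h4.le) h5.le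
    _ < p.ℓ₁ / p.ℓ₂ * p.φ y * Real.exp (y^2 * (p.α₁ / p.α₂)) :=
        mul_lt_mul_of_pos_left h3 (mul_pos h4 (h2.trans_le h1))

lemma Q_continuous : Continuous p.Q := by
  unfold Q
  exact (continuous_const.mul p.φ_continuous).mul
    ((continuous_pow 2 |>.mul continuous_const).rexp)

/-- The constant in `H`. -/
lemma H_const_pos :
    0 < p.Ste₂ / Real.sqrt Real.pi * (p.ℓ₂ / p.ℓ₁) *
      Real.sqrt (p.k₂ * p.c₁ / (p.k₁ * p.c₂)) := by
  have h1 := p.Ste₂_pos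
  have h2 := sqrt_pi_pos
  have h3 := p.hℓ₁; have h4 := p.hℓ₂
  have h5 : 0 < p.k₂ * p.c₁ / (p.k₁ * p.c₂) :=
    div_pos (mul_pos p.hk₂ p.hc₁) (mul_pos p.hk₁ p.hc₂)
  have h6 := Real.sqrt_pos.2 h5
  positivity

lemma H_mono : MonotoneOn p.H (Ici 0) := by
  intro x hx y hy hxy
  have hr : 0 ≤ Real.sqrt (p.α₁ / p.α₂) := Real.sqrt_nonneg _
  have h1 : erf (x * Real.sqrt (p.α₁ / p.α₂)) ≤ erf (y * Real.sqrt (p.α₁ / p.α₂)) :=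
    erf_strictMono.monotone (mul_le_mul_of_nonneg_right hxy hr)
  have h2 : Real.exp (-(y^2) * (p.α₁ / p.α₂)) / p.φ y
      ≤ Real.exp (-(x^2) * (p.α₁ / p.α₂)) / p.φ x := by
    have hφx : 0 < p.φ x := p.φ_pos hx
    have hφy : 0 < p.φ y := p.φ_pos hy
    have he : Real.exp (-(y^2) * (p.α₁ / p.α₂)) ≤ Real.exp (-(x^2) * (p.α₁ / p.α₂)) := by
      apply Real.exp_le_exp.2
      have : x^2 ≤ y^2 := pow_le_pow_left₀ hx hxy 2
      nlinarith [p.b_pos]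
    have hφ : p.φ x ≤ p.φ y := p.φ_mono hx hy hxy
    rw [div_le_div_iff₀ hφy hφx]
    nlinarith [Real.exp_pos (-(y^2) * (p.α₁ / p.α₂))]
  rw [H, H]
  have hc := p.H_const_pos
  exact sub_le_sub h1 (mul_le_mul_of_nonneg_left h2 hc.le)

lemma H_lt_one {z : ℝ} (hz : 0 ≤ z) : p.H z < 1 := by
  rw [H]
  have hc := p.H_const_pos
  have h2 : 0 < Real.exp (-(z^2) * (p.α₁ / p.α₂)) / p.φ z :=
    div_pos (Real.exp_pos _) (p.φ_pos hz)
  have h3 := erf_lt_one (z * Real.sqrt (p.α₁ / p.α₂))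
  nlinarith

lemma H_continuousOn : ContinuousOn p.H (Ici 0) := by
  unfold H
  apply ContinuousOn.sub
  · exact (erf_continuous.comp (continuous_id.mul continuous_const)).continuousOn
  · apply ContinuousOn.mul continuousOn_const
    apply ContinuousOn.div
    · exact ((continuous_pow 2 |>.neg.mul continuous_const).rexp).continuousOn
    · exact p.φ_continuous.continuousOn
    · exact fun z hz => (p.φ_pos hz).ne'

lemma P_continuous (q₀ : ℝ) : Continuous (p.P q₀) := by
  unfold P
  apply Continuous.mul
  · exact (continuous_pow 2 |>.mul continuous_const).rexp
  · exact (continuous_id.neg).add (continuous_const.mul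
      ((continuous_pow 2 |>.neg.mul continuous_const).rexp))

lemma P_zero (q₀ : ℝ) :
    p.P q₀ 0 = q₀ / p.ℓ₂ * Real.sqrt (p.c₁ / (p.ρ * p.k₁)) := by
  simp [P]

lemma P_antitoneOn (q₀ : ℝ) (hα : p.α₃ < p.α₂) (hq : 0 ≤ q₀) :
    AntitoneOn (p.P q₀) (Ici 0) := by
  intro u hu v hv huv
  simp only [P]
  set b := p.α₁ / p.α₂ with hb
  set d := p.α₁ / p.α₃ with hd
  have hbd : b < d := div_lt_div_of_pos_left p.α₁_pos p.α₃_pos hα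
  have hbpos := p.b_pos
  have ha : 0 ≤ q₀ / p.ℓ₂ * Real.sqrt (p.c₁ / (p.ρ * p.k₁)) := by
    have := p.hℓ₂; positivity
  set a := q₀ / p.ℓ₂ * Real.sqrt (p.c₁ / (p.ρ * p.k₁))
  have key : ∀ t : ℝ, Real.exp (t^2 * b) * (-t + a * Real.exp (-(t^2) * d))
      = -t * Real.exp (t^2 * b) + a * Real.exp (t^2 * (b - d)) := by
    intro t
    rw [mul_add, mul_comm (Real.exp (t^2*b)) (a * Real.exp (-(t^2)*d)), mul_assoc,
      ← Real.exp_add]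
    ring_nf
  rw [key, key]
  have h1 : u * Real.exp (u^2 * b) ≤ v * Real.exp (v^2 * b) := by
    apply mul_le_mul huv _ (Real.exp_pos _).le (le_trans hu huv)
    apply Real.exp_le_exp.2
    apply mul_le_mul_of_nonneg_right (pow_le_pow_left₀ hu huv 2) hbpos.le
  have h2 : Real.exp (v^2 * (b - d)) ≤ Real.exp (u^2 * (b - d)) := by
    apply Real.exp_le_exp.2
    apply mul_le_mul_of_nonpos_right (pow_le_pow_left₀ hu huv 2) (by linarith)
  nlinarith [mul_le_mul_of_nonneg_left h2 ha]

end Params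
namespace Params

variable (p : Params)

def psi (t : ℝ) : ℝ := erf (t * Real.sqrt (p.α₁ / p.α₂))

lemma r_pos : 0 < Real.sqrt (p.α₁ / p.α₂) := Real.sqrt_pos.2 p.b_pos

lemma psi_strictMono : StrictMono p.psi := fun x y hxy =>
  erf_strictMono (mul_lt_mul_of_pos_right hxy p.r_pos)

lemma psi_zero : p.psi 0 = 0 := by simp [psi, erf_zero]

lemma psi_continuous : Continuous p.psi :=
  erf_continuous.comp (continuous_id.mul continuous_const)

lemma psi_surj {y : ℝ} (h0 : 0 ≤ y) (h1 : y < 1) : ∃ t, 0 ≤ t ∧ p.psi t = y := by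
  have htop : Tendsto p.psi atTop (𝓝 1) := by
    have hmul : Tendsto (fun t : ℝ => t * Real.sqrt (p.α₁ / p.α₂)) atTop atTop :=
      Tendsto.atTop_mul_const p.r_pos tendsto_id
    exact erf_tendsto_one.comp hmul
  obtain ⟨M, hM1, hM0⟩ :=
    ((htop.eventually (eventually_gt_nhds h1)).and (eventually_ge_atTop (0:ℝ))).exists
  have hIVT := intermediate_value_Icc hM0 p.psi_continuous.continuousOn
  have hy : y ∈ Icc (p.psi 0) (p.psi M) := by
    rw [psi_zero]
    exact ⟨h0, hM1.le⟩
  obtain ⟨t, ht, hψt⟩ := hIVT hy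
  exact ⟨t, ht.1, hψt⟩

def lam2 (q : ℝ) : ℝ := Function.invFun p.psi q

lemma lam2_spec {z₀ z : ℝ} (hz₀ : 0 < z₀) (hH0 : p.H z₀ = 0) (hz : z₀ ≤ z) :
    p.psi (p.lam2 (p.H z)) = p.H z ∧ 0 ≤ p.lam2 (p.H z) := by
  have hz0 : (0:ℝ) ≤ z := le_trans hz₀.le hz
  have hge : 0 ≤ p.H z := by
    rw [← hH0]
    exact p.H_mono (mem_Ici.2 hz₀.le) (mem_Ici.2 hz0) hz
  have hlt : p.H z < 1 := p.H_lt_one hz0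
  obtain ⟨t, ht0, hψt⟩ := p.psi_surj hge hlt
  have heq : p.psi (Function.invFun p.psi (p.H z)) = p.H z := Function.invFun_eq ⟨t, hψt⟩
  have hteq : Function.invFun p.psi (p.H z) = t :=
    p.psi_strictMono.injective (heq.trans hψt.symm)
  refine ⟨heq, ?_⟩
  rw [lam2, hteq]
  exact ht0

lemma lam2_continuousOn {z₀ : ℝ} (hz₀ : 0 < z₀) (hH0 : p.H z₀ = 0) :
    ContinuousOn (fun z => p.lam2 (p.H z)) (Ici z₀) := by
  intro x hx
  have hspec : ∀ z ∈ Ici z₀, p.psi (p.lam2 (p.H z)) = p.H z ∧ 0 ≤ p.lam2 (p.H z) :=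
    fun z hz => p.lam2_spec hz₀ hH0 hz
  have hHc : ContinuousWithinAt p.H (Ici z₀) x :=
    (p.H_continuousOn x (mem_Ici.2 (le_trans hz₀.le hx))).mono
      (Ici_subset_Ici.2 hz₀.le)
  rw [ContinuousWithinAt, tendsto_order]
  constructor
  · intro a ha
    rcases lt_or_ge a 0 with ha0 | ha0
    · filter_upwards [self_mem_nhdsWithin] with z hz
      exact lt_of_lt_of_le ha0 (hspec z hz).2
    · have h1 : p.psi a < p.H x := by
        rw [← (hspec x hx).1]
        exact p.psi_strictMono ha
      filter_upwards [hHc.eventually (eventually_gt_nhds h1), self_mem_nhdsWithin]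
        with z h2 hz
      have h3 : p.psi a < p.psi (p.lam2 (p.H z)) := by rw [(hspec z hz).1]; exact h2
      exact p.psi_strictMono.lt_iff_lt.1 h3
  · intro b hb
    have h1 : p.H x < p.psi b := by
      rw [← (hspec x hx).1]
      exact p.psi_strictMono hb
    filter_upwards [hHc.eventually (eventually_lt_nhds h1), self_mem_nhdsWithin]
      with z h2 hz
    have h3 : p.psi (p.lam2 (p.H z)) < p.psi b := by rw [(hspec z hz).1]; exact h2
    exact p.psi_strictMono.lt_iff_lt.1 h3

/-- The square-root identity behind the `q₂` formula. -/
lemma sqrt_identity :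
    Real.sqrt (p.α₂ * Real.pi) * Real.sqrt (p.k₂ * p.c₁ / (p.k₁ * p.c₂)) * p.c₂
      = Real.sqrt Real.pi * Real.sqrt (p.c₁ / (p.ρ * p.k₁)) * p.k₂ := by
  have h1 : 0 ≤ p.α₂ * Real.pi := mul_nonneg p.α₂_pos.le Real.pi_pos.le
  have h2 : 0 ≤ p.k₂ * p.c₁ / (p.k₁ * p.c₂) :=
    (div_pos (mul_pos p.hk₂ p.hc₁) (mul_pos p.hk₁ p.hc₂)).le
  have h3 : (0:ℝ) ≤ Real.pi := Real.pi_pos.le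
  have h4 : 0 ≤ p.c₁ / (p.ρ * p.k₁) := (div_pos p.hc₁ (mul_pos p.hρ p.hk₁)).le
  set L := Real.sqrt (p.α₂ * Real.pi) * Real.sqrt (p.k₂ * p.c₁ / (p.k₁ * p.c₂)) * p.c₂ with hL
  set R := Real.sqrt Real.pi * Real.sqrt (p.c₁ / (p.ρ * p.k₁)) * p.k₂ with hR
  have hLn : 0 ≤ L := by
    have := Real.sqrt_nonneg (p.α₂ * Real.pi)
    have := Real.sqrt_nonneg (p.k₂ * p.c₁ / (p.k₁ * p.c₂))
    have := p.hc₂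
    positivity
  have hRn : 0 ≤ R := by
    have := Real.sqrt_nonneg Real.pi
    have := Real.sqrt_nonneg (p.c₁ / (p.ρ * p.k₁))
    have := p.hk₂
    positivity
  have hsq : L^2 = R^2 := by
    rw [hL, hR, mul_pow, mul_pow, mul_pow, mul_pow,
      Real.sq_sqrt h1, Real.sq_sqrt h2, Real.sq_sqrt h3, Real.sq_sqrt h4]
    rw [α₂]
    have hk₁ := p.hk₁.ne'
    have hc₂ := p.hc₂.ne'
    have hρ := p.hρ.ne'
    field_simp
  calc L = Real.sqrt (L^2) := (Real.sqrt_sq hLn).symm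
    _ = Real.sqrt (R^2) := by rw [hsq]
    _ = R := Real.sqrt_sq hRn

end Params
namespace Params

variable (p : Params)

lemma Q_lt_P_zero {q₀ z₀ : ℝ} (hz₀ : 0 < z₀) (hH0 : p.H z₀ = 0) (hq : p.q2 z₀ < q₀) :
    p.Q z₀ < p.P q₀ 0 := by
  set A := Real.sqrt (p.c₁ / (p.ρ * p.k₁)) with hA
  have hApos : 0 < A := Real.sqrt_pos.2 (div_pos p.hc₁ (mul_pos p.hρ p.hk₁))
  set X := Real.exp (z₀^2 * (p.α₁ / p.α₂)) with hX
  have hXpos : 0 < X := Real.exp_pos _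
  have hφ₀ : 0 < p.φ z₀ := p.φ_pos hz₀.le
  have hexp : Real.exp (-(z₀^2) * (p.α₁ / p.α₂)) = X⁻¹ := by
    rw [hX, ← Real.exp_neg]
    ring_nf
  set W := Real.sqrt (p.k₂ * p.c₁ / (p.k₁ * p.c₂)) with hW
  have hWpos : 0 < W :=
    Real.sqrt_pos.2 (div_pos (mul_pos p.hk₂ p.hc₁) (mul_pos p.hk₁ p.hc₂))
  set S := Real.sqrt (p.α₂ * Real.pi) with hS
  have hSpos : 0 < S := Real.sqrt_pos.2 (mul_pos p.α₂_pos Real.pi_pos)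
  have hπ := sqrt_pi_pos
  have hstar := p.sqrt_identity
  rw [← hW, ← hS, ← hA] at hstar
  have hE : erf (z₀ * Real.sqrt (p.α₁ / p.α₂))
      = p.Ste₂ / Real.sqrt Real.pi * (p.ℓ₂ / p.ℓ₁) * W * (X⁻¹ / p.φ z₀) := by
    have h := hH0
    rw [H, hexp] at h
    linarith
  have hBC : (0:ℝ) < p.B - p.C := sub_pos.2 p.hBC
  have hSE : S * erf (z₀ * Real.sqrt (p.α₁ / p.α₂))
      = A * p.k₂ * (p.B - p.C) / (p.ℓ₁ * p.φ z₀ * X) := by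
    rw [hE, Ste₂]
    have h1 := p.hℓ₁.ne'
    have h2 := p.hℓ₂.ne'
    have h4 := hπ.ne'
    have h5 := hφ₀.ne'
    have h6 := hXpos.ne'
    field_simp
    linear_combination hstar
  have hq2A : p.q2 z₀ * A = p.ℓ₁ * p.φ z₀ * X := by
    rw [q2, ← hS, show Real.sqrt (p.α₂ * Real.pi) * erf (z₀ * Real.sqrt (p.α₁ / p.α₂))
      = S * erf (z₀ * Real.sqrt (p.α₁ / p.α₂)) from by rw [hS], hSE]
    have h1 := p.hℓ₁.ne'
    have h5 := hφ₀.ne'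
    have h6 := hXpos.ne'
    have h7 := hApos.ne'
    have h8 := p.hk₂.ne'
    have h9 := hBC.ne'
    field_simp
  have h1 : p.q2 z₀ * A < q₀ * A := mul_lt_mul_of_pos_right hq hApos
  rw [hq2A] at h1
  rw [Q, P_zero, ← hA, ← hX,
    show p.ℓ₁ / p.ℓ₂ * p.φ z₀ * X = p.ℓ₁ * p.φ z₀ * X / p.ℓ₂ by ring,
    show q₀ / p.ℓ₂ * A = q₀ * A / p.ℓ₂ by ring]
  exact (div_lt_div_iff_of_pos_right p.hℓ₂).2 h1
end Params
/-- existence and uniqueness for the reduced Neumann problem: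
if `α₂ > α₃` and `q₀ > q₂`, there is a unique `λ₁ > z₀` with `Q(λ₁) = P(λ₂)`,
where `λ₂ ≥ 0` is the unique number with `erf(λ₂√(α₁/α₂)) = H(λ₁)`. -/
theorem neumann_exists_unique (p : Params) (q₀ z₀ : ℝ)
    (hα : p.α₃ < p.α₂)
    (hz₀ : 0 < z₀ ∧ p.H z₀ = 0)
    (hq₀ : p.q2 z₀ < q₀) :
    ∃! lam₁ : ℝ, z₀ < lam₁ ∧ ∃ lam₂ : ℝ, 0 ≤ lam₂ ∧
      erf (lam₂ * Real.sqrt (p.α₁ / p.α₂)) = p.H lam₁ ∧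
      p.Q lam₁ = p.P q₀ lam₂ := by
  obtain ⟨hz₀pos, hH0⟩ := hz₀
  have hQP := p.Q_lt_P_zero hz₀pos hH0 hq₀
  have hq₀pos : 0 < q₀ := by
    have hQpos : 0 < p.Q z₀ := by
      rw [Params.Q]
      have h1 := p.φ_pos hz₀pos.le
      have h2 := p.hℓ₁
      have h3 := p.hℓ₂
      positivity
    rw [p.P_zero] at hQP
    by_contra h
    push_neg at h
    have h4 : q₀ / p.ℓ₂ ≤ 0 := by
      rw [div_eq_mul_inv]
      exact mul_nonpos_of_nonpos_of_nonneg h (inv_nonneg.2 p.hℓ₂.le)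
    have h5 : q₀ / p.ℓ₂ * Real.sqrt (p.c₁ / (p.ρ * p.k₁)) ≤ 0 :=
      mul_nonpos_of_nonpos_of_nonneg h4 (Real.sqrt_nonneg _)
    linarith
  set L2 : ℝ → ℝ := fun z => p.lam2 (p.H z) with hL2
  have hspec : ∀ z, z₀ ≤ z → p.psi (L2 z) = p.H z ∧ 0 ≤ L2 z :=
    fun z hz => p.lam2_spec hz₀pos hH0 hz
  set F : ℝ → ℝ := fun z => p.Q z - p.P q₀ (L2 z) with hF
  have hF_cont : ContinuousOn F (Set.Ici z₀) :=
    p.Q_continuous.continuousOn.sub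
      ((p.P_continuous q₀).comp_continuousOn (p.lam2_continuousOn hz₀pos hH0))
  have hL2z₀ : L2 z₀ = 0 := by
    have h := (hspec z₀ le_rfl).1
    rw [hH0, ← p.psi_zero] at h
    exact p.psi_strictMono.injective h
  have hFz₀ : F z₀ < 0 := by
    simp only [hF]
    rw [hL2z₀]
    linarith
  have hFmono : StrictMonoOn F (Set.Ici z₀) := by
    intro x hx y hy hxy
    have hx0 : (0:ℝ) ≤ x := le_trans hz₀pos.le hx
    have hy0 : (0:ℝ) ≤ y := le_trans hz₀pos.le hy
    have hQ : p.Q x < p.Q y := p.Q_strictMonoOn (Set.mem_Ici.2 hx0) (Set.mem_Ici.2 hy0) hxy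
    have hHle : p.H x ≤ p.H y := p.H_mono (Set.mem_Ici.2 hx0) (Set.mem_Ici.2 hy0) hxy.le
    have hL2le : L2 x ≤ L2 y := by
      apply p.psi_strictMono.le_iff_le.1
      rw [(hspec x hx).1, (hspec y hy).1]
      exact hHle
    have hP : p.P q₀ (L2 y) ≤ p.P q₀ (L2 x) :=
      p.P_antitoneOn q₀ hα hq₀pos.le (Set.mem_Ici.2 (hspec x hx).2)
        (Set.mem_Ici.2 (hspec y hy).2) hL2le
    simp only [hF]
    linarith
  set M : ℝ := max (z₀ + 1) (p.ℓ₂ / p.ℓ₁ * (p.P q₀ 0 + 1)) with hM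
  have hM1 : z₀ < M := lt_of_lt_of_le (lt_add_one z₀) (le_max_left _ _)
  have hl : 0 < p.ℓ₁ / p.ℓ₂ := div_pos p.hℓ₁ p.hℓ₂
  have hMgoal : p.P q₀ 0 < p.ℓ₁ / p.ℓ₂ * M := by
    have h2 : p.ℓ₂ / p.ℓ₁ * (p.P q₀ 0 + 1) ≤ M := le_max_right _ _
    have h3 := mul_le_mul_of_nonneg_left h2 hl.le
    have heq : p.ℓ₁ / p.ℓ₂ * (p.ℓ₂ / p.ℓ₁ * (p.P q₀ 0 + 1)) = p.P q₀ 0 + 1 := by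
      have := p.hℓ₁.ne'
      have := p.hℓ₂.ne'
      field_simp
    linarith
  have hFM : 0 < F M := by
    have hM0 : (0:ℝ) ≤ M := le_trans hz₀pos.le hM1.le
    have hQM : p.ℓ₁ / p.ℓ₂ * M ≤ p.Q M := by
      rw [Params.Q]
      have hφ : M ≤ p.φ M := by
        rw [p.φ_eq]
        have h1 := ugauss_pos M
        have h2 := p.Ste₁_pos
        have h3 := sqrt_pi_pos
        have h4 := mul_pos (div_pos h2 h3) h1
        linarith
      have hφpos : 0 < p.φ M := p.φ_pos hM0
      have hexp1 : 1 ≤ Real.exp (M^2 * (p.α₁ / p.α₂)) := by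
        apply Real.one_le_exp
        have := p.b_pos
        positivity
      calc p.ℓ₁ / p.ℓ₂ * M ≤ p.ℓ₁ / p.ℓ₂ * p.φ M := mul_le_mul_of_nonneg_left hφ hl.le
        _ ≤ p.ℓ₁ / p.ℓ₂ * p.φ M * Real.exp (M^2 * (p.α₁ / p.α₂)) :=
            le_mul_of_one_le_right (by positivity) hexp1
    have hPM : p.P q₀ (L2 M) ≤ p.P q₀ 0 :=
      p.P_antitoneOn q₀ hα hq₀pos.le (Set.self_mem_Ici)
        (Set.mem_Ici.2 (hspec M hM1.le).2) (hspec M hM1.le).2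
    simp only [hF]
    linarith
  obtain ⟨c, hc, hFc⟩ := intermediate_value_Icc hM1.le (hF_cont.mono Set.Icc_subset_Ici_self)
    ⟨hFz₀.le, hFM.le⟩
  have hcz₀ : z₀ < c := by
    rcases eq_or_lt_of_le hc.1 with h | h
    · rw [← h] at hFc
      linarith
    · exact h
  refine ⟨c, ⟨hcz₀, L2 c, (hspec c hcz₀.le).2, (hspec c hcz₀.le).1, ?_⟩, ?_⟩
  · simp only [hF] at hFc
    linarith
  · rintro x ⟨hxz₀, t, ht0, hψt, hQx⟩
    have hteq : t = L2 x := by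
      apply p.psi_strictMono.injective
      rw [(hspec x hxz₀.le).1]
      exact hψt
    have hFx : F x = 0 := by
      simp only [hF]
      rw [← hteq]
      linarith
    exact hFmono.injOn (Set.mem_Ici.2 hxz₀.le) (Set.mem_Ici.2 hcz₀.le) (hFx.trans hFc.symm)
end
end

section
/- Assume α₂ > α₃ and A∞ > B. Then h₂ > h₁, where h₂ := ((B−C)/(A∞−B))·√(k₂·k₃·c₂/(π·c₃·α₃))·(1/erf(z₀·√(α₁/α₂))) and h₁ := (k₁/√(π·α₁))·(C−D)/(A∞−C). -/
noncomputable section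

namespace StefanAux

open MeasureTheory Set Filter intervalIntegral

lemma cont_gauss : Continuous fun s : ℝ => Real.exp (-(s^2)) := by continuity

lemma intInt_gauss (a b : ℝ) : IntervalIntegrable (fun s : ℝ => Real.exp (-(s^2))) volume a b :=
  cont_gauss.intervalIntegrable a b

lemma integrable_gauss : IntegrableOn (fun s : ℝ => Real.exp (-(s^2))) (Set.Ioi 0) := by
  have h := (integrable_exp_neg_mul_sq (b := (1:ℝ)) one_pos)
  have h2 : Integrable (fun s : ℝ => Real.exp (-(s^2))) := by simpa using h
  exact h2.integrableOn

lemma integral_gauss_Ioi : ∫ s in Set.Ioi (0:ℝ), Real.exp (-(s^2)) = Real.sqrt Real.pi / 2 := by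
  have := integral_gaussian_Ioi 1
  simpa using this

lemma sqrt_pi_pos : 0 < Real.sqrt Real.pi := Real.sqrt_pos.mpr Real.pi_pos

lemma hasDerivAt_erf (x : ℝ) :
    HasDerivAt erf (2 / Real.sqrt Real.pi * Real.exp (-(x^2))) x := by
  have h := (intervalIntegral.integral_hasDerivAt_right (intInt_gauss 0 x)
    (cont_gauss.stronglyMeasurableAtFilter _ _) cont_gauss.continuousAt)
  exact h.const_mul (2 / Real.sqrt Real.pi)

lemma erf_zero : erf 0 = 0 := by simp [erf]

lemma erf_pos {x : ℝ} (hx : 0 < x) : 0 < erf x := by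
  have h : 0 < ∫ s in (0:ℝ)..x, Real.exp (-(s^2)) :=
    intervalIntegral.intervalIntegral_pos_of_pos_on (intInt_gauss 0 x)
      (fun s _ => Real.exp_pos _) hx
  have h2 : 0 < 2 / Real.sqrt Real.pi := by positivity
  exact mul_pos h2 h

lemma erf_lt_one (x : ℝ) : erf x < 1 := by
  have key : ∫ s in (0:ℝ)..x, Real.exp (-(s^2)) < Real.sqrt Real.pi / 2 := by
    rcases le_or_gt x 0 with hx | hx
    · have h1 : (0:ℝ) ≤ ∫ s in x..(0:ℝ), Real.exp (-(s^2)) :=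
        intervalIntegral.integral_nonneg hx (fun s _ => (Real.exp_pos _).le)
      have h2 : ∫ s in (0:ℝ)..x, Real.exp (-(s^2)) = -∫ s in x..(0:ℝ), Real.exp (-(s^2)) :=
        (intervalIntegral.integral_symm _ _)
      have := sqrt_pi_pos
      rw [h2]; linarith
    · have hsplit : ∫ s in Set.Ioi (0:ℝ), Real.exp (-(s^2))
          = (∫ s in Set.Ioc (0:ℝ) x, Real.exp (-(s^2))) + ∫ s in Set.Ioi x, Real.exp (-(s^2)) := by
        rw [← MeasureTheory.setIntegral_union (Set.Ioc_disjoint_Ioi le_rfl) measurableSet_Ioi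
          (integrable_gauss.mono_set Set.Ioc_subset_Ioi_self)
          (integrable_gauss.mono_set (Set.Ioi_subset_Ioi hx.le)),
          Set.Ioc_union_Ioi_eq_Ioi hx.le]
      have hpos : 0 < ∫ s in Set.Ioi x, Real.exp (-(s^2)) := by
        rw [MeasureTheory.setIntegral_pos_iff_support_of_nonneg_ae
          (Filter.Eventually.of_forall fun s => (Real.exp_pos _).le)
          (integrable_gauss.mono_set (Set.Ioi_subset_Ioi hx.le))]
        have : (Function.support fun s : ℝ => Real.exp (-(s^2))) = Set.univ := by
          ext s; simp [Function.support, (Real.exp_pos _).ne']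
        rw [this, Set.univ_inter]
        simp
      rw [intervalIntegral.integral_of_le hx.le]
      rw [integral_gauss_Ioi] at hsplit
      linarith
  have h2 : 0 < 2 / Real.sqrt Real.pi := by positivity
  have h3 := mul_lt_mul_of_pos_left key h2
  have heq : 2 / Real.sqrt Real.pi * (Real.sqrt Real.pi / 2) = 1 := by
    field_simp
  rw [heq] at h3
  exact h3

lemma tendsto_erf : Tendsto erf atTop (nhds 1) := by
  have h := MeasureTheory.intervalIntegral_tendsto_integral_Ioi (b := fun x : ℝ => x)
    (0:ℝ) integrable_gauss tendsto_id
  have h2 := h.const_mul (2 / Real.sqrt Real.pi)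
  rw [integral_gauss_Ioi] at h2
  have heq : 2 / Real.sqrt Real.pi * (Real.sqrt Real.pi / 2) = 1 := by field_simp
  rw [heq] at h2
  exact h2

lemma one_sub_exp_le_erf {x : ℝ} (hx : 0 ≤ x) : 1 - Real.exp (-(x^2)) ≤ erf x := by
  set f : ℝ → ℝ := fun y => erf y - 1 + Real.exp (-(y^2)) with hf
  have hd : ∀ y : ℝ, HasDerivAt f (Real.exp (-(y^2)) * (2 / Real.sqrt Real.pi - 2*y)) y := by
    intro y
    have h1 := hasDerivAt_erf y
    have h2 : HasDerivAt (fun t : ℝ => -(t^2)) (-(2*y)) y := by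
      simpa [Pi.neg_def] using (hasDerivAt_pow 2 y).neg
    have h3 := h2.exp
    have h4 := (h1.sub_const 1).add h3
    refine h4.congr_deriv ?_
    ring
  have hderiv : ∀ y : ℝ, deriv f y = Real.exp (-(y^2)) * (2 / Real.sqrt Real.pi - 2*y) :=
    fun y => (hd y).deriv
  have hdiff : Differentiable ℝ f := fun y => (hd y).differentiableAt
  have hcont : Continuous f := hdiff.continuous
  have hf0 : f 0 = 0 := by simp [hf, erf_zero]
  suffices h : 0 ≤ f x by simp only [hf] at h; linarith
  rcases le_or_gt x (1 / Real.sqrt Real.pi) with hxs | hxs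
  · have hmono : MonotoneOn f (Set.Icc 0 x) := by
      apply monotoneOn_of_deriv_nonneg (convex_Icc 0 x) hcont.continuousOn
        (hdiff.differentiableOn)
      intro y hy
      rw [interior_Icc] at hy
      rw [hderiv]
      have hy2 : y ≤ 1 / Real.sqrt Real.pi := le_trans hy.2.le hxs
      have h2 : 0 ≤ 2 / Real.sqrt Real.pi - 2*y := by
        have hsp := sqrt_pi_pos
        rw [sub_nonneg, le_div_iff₀ hsp]
        rw [le_div_iff₀ hsp] at hy2
        linarith
      positivity
    rcases eq_or_lt_of_le hx with h | h
    · rw [← h, hf0]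
    · have := hmono (Set.left_mem_Icc.mpr hx) (Set.right_mem_Icc.mpr hx) hx
      rw [hf0] at this; exact this
  · have hant : AntitoneOn f (Set.Ici x) := by
      apply antitoneOn_of_deriv_nonpos (convex_Ici x) hcont.continuousOn
        (hdiff.differentiableOn)
      intro y hy
      rw [interior_Ici] at hy
      rw [hderiv]
      have hy' : 1 / Real.sqrt Real.pi < y := lt_trans hxs hy
      have h2 : 2 / Real.sqrt Real.pi - 2*y ≤ 0 := by
        have hsp := sqrt_pi_pos
        rw [div_lt_iff₀ hsp] at hy'
        rw [sub_nonpos, div_le_iff₀ hsp]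
        nlinarith
      exact mul_nonpos_of_nonneg_of_nonpos (Real.exp_pos _).le h2
    have hlim : Tendsto f atTop (nhds 0) := by
      have h2 : Tendsto (fun y : ℝ => Real.exp (-(y^2))) atTop (nhds 0) := by
        apply Real.tendsto_exp_atBot.comp
        have hsq : Tendsto (fun y : ℝ => y^2) atTop atTop := tendsto_pow_atTop (by norm_num)
        exact tendsto_neg_atBot_iff.mpr hsq
      have := (tendsto_erf.sub_const 1).add h2
      simpa [hf] using this
    apply le_of_tendsto hlim
    filter_upwards [eventually_ge_atTop x] with y hy
    exact hant (Set.self_mem_Ici) hy hy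

end StefanAux

/-- if `α₂ > α₃` and `A∞ > B`, then `h₂ > h₁` where
`h₁ = (k₁/√(πα₁))(C−D)/(A∞−C)`. -/


theorem h2_gt_h1 (p : Params) (Ainf z₀ : ℝ)
    (hα : p.α₃ < p.α₂) (hAinf : p.B < Ainf)
    (hz₀ : 0 < z₀ ∧ p.H z₀ = 0) :
    (p.k₁ / Real.sqrt (Real.pi * p.α₁)) * ((p.C - p.D) / (Ainf - p.C)) <
      p.h2 Ainf z₀ := by
  obtain ⟨hz, hH⟩ := hz₀
  obtain ⟨k₁, k₂, k₃, c₁, c₂, c₃, ρ, ℓ₁, ℓ₂, B, C, D, hk₁, hk₂, hk₃, hc₁, hc₂, hc₃, hρ, hℓ₁, hℓ₂, hBC, hCD⟩ := p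
  simp only [Params.h2, Params.H, Params.α₁, Params.α₂, Params.α₃, Params.Ste₁, Params.Ste₂,
    Params.φ] at *
  have hπ : (0:ℝ) < Real.pi := Real.pi_pos
  have hsπ : (0:ℝ) < Real.sqrt Real.pi := Real.sqrt_pos.mpr hπ
  have hα₁ : (0:ℝ) < k₁ / (ρ * c₁) := by positivity
  have hα₂ : (0:ℝ) < k₂ / (ρ * c₂) := by positivity
  have hα₃ : (0:ℝ) < k₃ / (ρ * c₃) := by positivity
  have hAC : C < Ainf := lt_trans hBC hAinf
  have hAB : 0 < Ainf - B := by linarith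
  have hACpos : 0 < Ainf - C := by linarith
  -- abbreviations
  set a := Real.sqrt (k₁ / (ρ * c₁) / (k₂ / (ρ * c₂))) with ha
  have hapos : 0 < a := Real.sqrt_pos.mpr (by positivity)
  set e := erf (z₀ * a) with he
  have hepos : 0 < e := StefanAux.erf_pos (by positivity)
  set E2 := Real.exp (-(z₀^2) * (k₁ / (ρ * c₁) / (k₂ / (ρ * c₂)))) with hE2
  have hE2pos : 0 < E2 := Real.exp_pos _
  have hE2lt : E2 < 1 := by
    rw [hE2, Real.exp_lt_one_iff]
    have : 0 < z₀^2 * (k₁ / (ρ * c₁) / (k₂ / (ρ * c₂))) := by positivity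
    linarith
  set K := (c₂ * (B - C) / ℓ₂ / Real.sqrt Real.pi) * (ℓ₂ / ℓ₁) *
    Real.sqrt (k₂ * c₁ / (k₁ * c₂)) with hK
  have hBCpos : 0 < B - C := sub_pos.mpr hBC
  have hCDpos : 0 < C - D := sub_pos.mpr hCD
  have hKpos : 0 < K := by
    rw [hK]
    have : (0:ℝ) < Real.sqrt (k₂ * c₁ / (k₁ * c₂)) := Real.sqrt_pos.mpr (by positivity)
    have h1 : (0:ℝ) < c₂ * (B - C) / ℓ₂ / Real.sqrt Real.pi := by positivity
    positivity
  set S := c₁ * (C - D) / ℓ₁ / Real.sqrt Real.pi with hS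
  have hSpos : 0 < S := by rw [hS]; positivity
  set Φ := z₀ + (c₁ * (C - D) / ℓ₁ / Real.sqrt Real.pi) * Real.exp (-(z₀^2)) / erfc z₀ with hΦ
  have hΦ' : Φ = z₀ + S * (Real.exp (-(z₀^2)) / erfc z₀) := by rw [hΦ, hS, mul_div_assoc]
  have herfc : 0 < erfc z₀ := by
    have := StefanAux.erf_lt_one z₀; unfold erfc; linarith
  have herfcle : erfc z₀ ≤ Real.exp (-(z₀^2)) := by
    have := StefanAux.one_sub_exp_le_erf hz.le; unfold erfc; linarith
  have hΦgt : S < Φ := by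
    rw [hΦ']
    have h1 : (1:ℝ) ≤ Real.exp (-(z₀^2)) / erfc z₀ := (one_le_div herfc).mpr herfcle
    have h2 : S ≤ S * (Real.exp (-(z₀^2)) / erfc z₀) :=
      le_mul_of_one_le_right hSpos.le h1
    linarith
  have hΦpos : 0 < Φ := lt_trans hSpos hΦgt
  -- from H = 0:
  have heΦ : e * Φ = K * E2 := by
    have : e = K * (E2 / Φ) := by linarith [hH]
    rw [this]; field_simp
  -- positivity of pieces of goal
  set M := ((B - C) / (Ainf - B)) * Real.sqrt (k₂ * k₃ * c₂ / (Real.pi * c₃ * (k₃ / (ρ * c₃)))) with hM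
  have hMpos : 0 < M := by
    rw [hM]
    have h1 : (0:ℝ) < (B - C) / (Ainf - B) := by positivity
    have h2 : (0:ℝ) < Real.sqrt (k₂ * k₃ * c₂ / (Real.pi * c₃ * (k₃ / (ρ * c₃)))) :=
      Real.sqrt_pos.mpr (by positivity)
    positivity
  set h1v := (k₁ / Real.sqrt (Real.pi * (k₁ / (ρ * c₁)))) * ((C - D) / (Ainf - C)) with hh1
  have hh1pos : 0 < h1v := by
    rw [hh1]
    have h1 : (0:ℝ) < (C - D) / (Ainf - C) := by positivity
    positivity
  -- reduce goal
  rw [show ((B - C) / (Ainf - B)) * Real.sqrt (k₂ * k₃ * c₂ / (Real.pi * c₃ * (k₃ / (ρ * c₃)))) *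
      (1 / e) = M * (1/e) by rw [hM], mul_one_div, lt_div_iff₀ hepos]
  -- key sqrt identity
  set Z := Real.sqrt (Real.pi * (k₁ / (ρ * c₁))) with hZ
  set X := Real.sqrt (k₂ * c₁ / (k₁ * c₂)) with hX
  set Y := Real.sqrt (k₂ * k₃ * c₂ / (Real.pi * c₃ * (k₃ / (ρ * c₃)))) with hY
  have hZpos : 0 < Z := Real.sqrt_pos.mpr (by positivity)
  have hXpos : 0 < X := Real.sqrt_pos.mpr (by positivity)
  have hYpos : 0 < Y := Real.sqrt_pos.mpr (by positivity)
  have hsqrtid : k₁ / Z * c₂ * X = Y * c₁ := by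
    have hA : (0:ℝ) ≤ k₁ / Z * c₂ * X := by positivity
    have hB' : (0:ℝ) ≤ Y * c₁ := by positivity
    have e1 : Z^2 = Real.pi * (k₁ / (ρ * c₁)) := Real.sq_sqrt (by positivity)
    have e2 : X^2 = k₂ * c₁ / (k₁ * c₂) := Real.sq_sqrt (by positivity)
    have e3 : Y^2 = k₂ * k₃ * c₂ / (Real.pi * c₃ * (k₃ / (ρ * c₃))) := Real.sq_sqrt (by positivity)
    rw [← Real.sqrt_sq hA, ← Real.sqrt_sq hB']
    congr 1
    rw [show (k₁ / Z * c₂ * X)^2 = k₁^2 / Z^2 * c₂^2 * X^2 by ring,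
      show (Y * c₁)^2 = Y^2 * c₁^2 by ring, e1, e2, e3]
    field_simp
  -- key scalar identity: h1v * K = M * S * ((Ainf - B)/(Ainf - C))
  have hkey : h1v * K = M * S * ((Ainf - B)/(Ainf - C)) := by
    have c1 : h1v * K = (k₁ / Z * c₂ * X) *
        ((C - D) * (B - C) / ((Ainf - C) * ℓ₁ * Real.sqrt Real.pi)) := by
      rw [hh1, hK]
      field_simp
    have c2' : M * S * ((Ainf - B)/(Ainf - C)) = (Y * c₁) *
        ((C - D) * (B - C) / ((Ainf - C) * ℓ₁ * Real.sqrt Real.pi)) := by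
      rw [hM, hS]
      field_simp
    rw [c1, hsqrtid, c2']
  -- chain
  have step1 : h1v * e = h1v * K * E2 / Φ := by
    rw [eq_div_iff (ne_of_gt hΦpos)]
    calc h1v * e * Φ = h1v * (e * Φ) := by ring
    _ = h1v * (K * E2) := by rw [heΦ]
    _ = h1v * K * E2 := by ring
  rw [step1, div_lt_iff₀ hΦpos]
  calc h1v * K * E2 < h1v * K * 1 := by
        exact mul_lt_mul_of_pos_left hE2lt (mul_pos hh1pos hKpos)
    _ = M * S * ((Ainf - B)/(Ainf - C)) := by rw [mul_one, hkey]
    _ < M * S * 1 := by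
        apply mul_lt_mul_of_pos_left _ (mul_pos hMpos hSpos)
        rw [div_lt_one hACpos]; linarith
    _ = M * S := by ring
    _ < M * Φ := mul_lt_mul_of_pos_left hΦgt hMpos
end
end
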